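/- Let p ≥ 1 and q ≥ 2 be integers and let j be an integer with 2 ≤ j ≤ p + q. Then ∑_{i=j−1}^{p+q−1} B_{p,q−1}(i) + C(2p−j, p)·C(2q−2, q−1) = B_{p,q}(j) + C(2p−j+1, p)·C(2q−3, q−1). -/

import Mathlib

/-- Binomial coefficient on integers: `C a b = 0` whenever `a < b` or `a < 0`,
    and otherwise the usual binomial coefficient. -/
def intChoose (a b : ℤ) : ℤ :=
  if a < b ∨ a < 0 then 0 else (a.toNat.choose b.toNat : ℤ)

/-- `F p s = C (2p − s − 1) (p − 1)`. -/
def F (p s : ℤ) : ℤ := intChoose (2 * p - s - 1) (p - 1)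

/-- `P s t = C (s + t − 2) (s − 1)` if `s, t ≥ 1`, and `0` otherwise. -/
def P (s t : ℤ) : ℤ :=
  if 1 ≤ s ∧ 1 ≤ t then intChoose (s + t - 2) (s - 1) else 0

/-- `A p q j = ∑_{s=1}^{p} ∑_{t=1}^{q, s+t=j} F_p(s)·F_q(t)`. -/
noncomputable def A (p q j : ℤ) : ℤ :=
  ∑ s ∈ Finset.Icc (1 : ℤ) p, ∑ t ∈ Finset.Icc (1 : ℤ) q,
    if s + t = j then F p s * F q t else 0

/-- `B p q j = ∑_{s=1}^{p} ∑_{t=1}^{q} F_p(s)·F_q(t)·P(s−j+1, t)`. -/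
noncomputable def B (p q j : ℤ) : ℤ :=
  ∑ s ∈ Finset.Icc (1 : ℤ) p, ∑ t ∈ Finset.Icc (1 : ℤ) q,
    F p s * F q t * P (s - j + 1) t

/-- `Cc p q j = ∑_{s=1}^{p} ∑_{t=j}^{q} F_p(s)·F_q(t)·P(s, t−j+1)`. -/
noncomputable def Cc (p q j : ℤ) : ℤ :=
  ∑ s ∈ Finset.Icc (1 : ℤ) p, ∑ t ∈ Finset.Icc j q,
    F p s * F q t * P s (t - j + 1)

open Finset

lemma intChoose_toNat {a b : ℤ} (ha : 0 ≤ a) : intChoose a b = (a.toNat.choose b.toNat : ℤ) := by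
  unfold intChoose
  split
  · rename_i h
    rcases h with h | h
    · rw [Nat.choose_eq_zero_of_lt (by omega)]; simp
    · omega
  · rfl

lemma intChoose_eq_natCast {a b : ℤ} {m n : ℕ} (hm : a = m) (hn : b = n) :
    intChoose a b = (m.choose n : ℤ) := by
  rw [hm, hn, intChoose_toNat (by positivity)]
  simp

lemma sum_Icc_int (f : ℤ → ℤ) (a b : ℤ) :
    ∑ i ∈ Icc a b, f i = ∑ x ∈ range ((b+1-a).toNat), f (a+x) := by
  apply Finset.sum_nbij' (fun i => (i-a).toNat) (fun x => a + (x:ℤ))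
  · intro i hi; simp only [Finset.mem_Icc] at hi; simp only [Finset.mem_range]; omega
  · intro x hx; simp only [Finset.mem_range] at hx; simp only [Finset.mem_Icc]; omega
  · intro i hi; simp only [Finset.mem_Icc] at hi; omega
  · intro x hx; simp only [Finset.mem_range] at hx; omega
  · intro i hi; simp only [Finset.mem_Icc] at hi
    congr 1; omega

lemma nat_hs (c k m : ℕ) :
    (∑ y ∈ range (m+1), (y+c).choose k) + c.choose (k+1) = (m+c+1).choose (k+1) := by
  induction m with
  | zero => simp [Nat.choose_succ_succ' c k, add_comm]
  | succ m ih =>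
    rw [Finset.sum_range_succ, add_right_comm, ih]
    have h0 : m + 1 + c = m + c + 1 := by omega
    rw [h0, Nat.choose_succ_succ' (m+c+1) k]
    omega

lemma nat_hs2 (c k m : ℕ) :
    (∑ x ∈ range (m+1), (c+(m-x)).choose k) + c.choose (k+1) = (m+c+1).choose (k+1) := by
  rw [← nat_hs c k m]
  congr 1
  rw [← Finset.sum_range_reflect (fun y => (y+c).choose k) (m+1)]
  apply Finset.sum_congr rfl; intro x hx
  simp only [Finset.mem_range] at hx
  congr 1; omega

lemma nat_V (a b m : ℕ) :
    ∑ x ∈ range (m+1), (a+x).choose a * (b+(m-x)).choose b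
      = (a+b+m+1).choose (a+b+1) := by
  induction a generalizing m with
  | zero =>
    have h1 : ∑ x ∈ range (m+1), (0+x).choose 0 * (b+(m-x)).choose b
        = ∑ x ∈ range (m+1), (b+(m-x)).choose b := by
      apply Finset.sum_congr rfl; intro x _; simp
    rw [h1]
    have h3 := nat_hs2 b b m
    have h5 : b.choose (b+1) = 0 := Nat.choose_succ_self b
    have h6 : (0+b+m+1).choose (0+b+1) = (m+b+1).choose (b+1) := by
      congr 1 <;> omega
    rw [h6]; omega
  | succ a ih =>
    induction m with
    | zero => simp
    | succ m ihm =>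
      have key : ∀ x ∈ range (m+1),
          (a+1+(x+1)).choose (a+1) * (b+(m+1-(x+1))).choose b
          = (a+(x+1)).choose a * (b+(m-x)).choose b
            + (a+1+x).choose (a+1) * (b+(m-x)).choose b := by
        intro x hx
        have h2 : m+1-(x+1) = m - x := by omega
        have h1 : a+1+(x+1) = (a+(x+1))+1 := by omega
        rw [h2, h1, Nat.choose_succ_succ' (a+(x+1)) a, add_mul]
        have h4 : a+(x+1) = a+1+x := by omega
        rw [h4]
      rw [Finset.sum_range_succ', Finset.sum_congr rfl key, Finset.sum_add_distrib, ihm,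
        Nat.choose_self, one_mul]
      have e1 : (∑ x ∈ range (m+1), (a+(x+1)).choose a * (b+(m-x)).choose b)
          + (b+(m+1-0)).choose b = (a+b+m+2).choose (a+b+1) := by
        have h := ih (m+1)
        rw [Finset.sum_range_succ'] at h
        simp only [Nat.succ_sub_succ, Nat.add_zero, Nat.choose_self, one_mul, Nat.sub_zero] at h ⊢
        convert h using 2 <;> omega
      have e3 : (a+1+b+(m+1)+1).choose (a+1+b+1)
          = (a+b+m+2).choose (a+b+1) + (a+1+b+m+1).choose (a+1+b+1) := by
        have h1 : (a+1+b+(m+1)+1).choose (a+1+b+1) = ((a+b+m+2)+1).choose ((a+b+1)+1) := by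
          congr 1 <;> omega
        rw [h1, Nat.choose_succ_succ' (a+b+m+2) (a+b+1)]
        congr 1
        congr 1 <;> omega
      rw [e3]
      omega

lemma conv_sum (q a : ℤ) (hq : 1 ≤ q) (ha : 1 ≤ a) :
    ∑ t ∈ Icc (1:ℤ) q, F q t * P a t = intChoose (a + 2*q - 2) (q-1) := by
  obtain ⟨κ, hκ⟩ : ∃ κ:ℕ, q = κ + 1 := ⟨(q-1).toNat, by omega⟩
  obtain ⟨α, hα⟩ : ∃ α:ℕ, a = α + 1 := ⟨(a-1).toNat, by omega⟩
  rw [sum_Icc_int]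
  rw [show ((q+1-1).toNat) = κ+1 by omega]
  have hterm : ∀ x ∈ range (κ+1), F q (1+(x:ℤ)) * P a (1+(x:ℤ))
      = (((α+x).choose α : ℕ) : ℤ) * (((κ+(κ-x)).choose κ : ℕ) : ℤ) := by
    intro x hx
    simp only [Finset.mem_range] at hx
    unfold F P
    rw [if_pos ⟨ha, by omega⟩]
    rw [intChoose_eq_natCast (show 2*q-(1+(x:ℤ))-1 = ((κ+(κ-x):ℕ):ℤ) by push_cast; omega)
        (show q-1 = ((κ:ℕ):ℤ) by omega),
      intChoose_eq_natCast (show a+(1+(x:ℤ))-2 = ((α+x:ℕ):ℤ) by push_cast; omega)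
        (show a-1 = ((α:ℕ):ℤ) by omega)]
    ring
  rw [Finset.sum_congr rfl hterm]
  have : ∑ x ∈ range (κ+1), (((α+x).choose α : ℕ) : ℤ) * (((κ+(κ-x)).choose κ : ℕ) : ℤ)
      = ((∑ x ∈ range (κ+1), (α+x).choose α * (κ+(κ-x)).choose κ : ℕ) : ℤ) := by
    push_cast; rfl
  rw [this, nat_V α κ κ]
  have hsymm : (α+κ+κ+1).choose (α+κ+1) = (α+κ+κ+1).choose κ := by
    have h := Nat.choose_symm (show κ ≤ α+κ+κ+1 by omega)
    rw [show α+κ+κ+1-κ = α+κ+1 by omega] at h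
    exact h
  rw [hsymm, intChoose_eq_natCast (show a + 2*q - 2 = ((α+κ+κ+1:ℕ):ℤ) by push_cast; omega)
    (show q-1 = ((κ:ℕ):ℤ) by omega)]

lemma intChoose_of_lt {a b : ℤ} (h : a < b) : intChoose a b = 0 := by
  unfold intChoose; rw [if_pos (Or.inl h)]

lemma intChoose_pascal (n k : ℤ) (hk : 1 ≤ k) :
    intChoose (n+1) k = intChoose n k + intChoose n (k-1) := by
  by_cases hn : 0 ≤ n
  · obtain ⟨ν, hν⟩ : ∃ ν : ℕ, n = ν := ⟨n.toNat, by omega⟩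
    obtain ⟨κ, hκ⟩ : ∃ κ : ℕ, k = κ + 1 := ⟨(k-1).toNat, by omega⟩
    rw [intChoose_eq_natCast (show n+1 = ((ν+1:ℕ):ℤ) by omega) (show k = ((κ+1:ℕ):ℤ) by omega),
      intChoose_eq_natCast (show n = ((ν:ℕ):ℤ) by omega) (show k = ((κ+1:ℕ):ℤ) by omega),
      intChoose_eq_natCast (show n = ((ν:ℕ):ℤ) by omega) (show k-1 = ((κ:ℕ):ℤ) by omega),
      Nat.choose_succ_succ' ν κ]
    push_cast; ring
  · rw [intChoose_of_lt (by omega), intChoose_of_lt (show n < k by omega)]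
    unfold intChoose
    rw [if_pos (Or.inr (by omega))]
    simp

lemma doubling (q : ℤ) (hq : 2 ≤ q) :
    intChoose (2*q-2) (q-1) = 2 * intChoose (2*q-3) (q-1) := by
  obtain ⟨m, hm⟩ : ∃ m:ℕ, q = m + 2 := ⟨(q-2).toNat, by omega⟩
  rw [intChoose_eq_natCast (show 2*q-2 = ((2*m+2:ℕ):ℤ) by push_cast; omega)
      (show q-1 = ((m+1:ℕ):ℤ) by push_cast; omega),
    intChoose_eq_natCast (show 2*q-3 = ((2*m+1:ℕ):ℤ) by push_cast; omega)
      (show q-1 = ((m+1:ℕ):ℤ) by push_cast; omega)]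
  have h := Nat.choose_symm (show m+1 ≤ 2*m+1 by omega)
  rw [show 2*m+1-(m+1) = m by omega] at h
  rw [show (2*m+2) = (2*m+1)+1 by omega, Nat.choose_succ_succ' (2*m+1) m, h]
  push_cast; ring

lemma B_closed (p q j : ℤ) (hq : 1 ≤ q) (hj : 1 ≤ j) :
    B p q j = ∑ s ∈ Icc j p, intChoose (2*p-s-1) (p-1) * intChoose (s-j+2*q-1) (q-1) := by
  unfold B
  have h1 : ∀ s ∈ Icc (1:ℤ) p, (∑ t ∈ Icc (1:ℤ) q, F p s * F q t * P (s-j+1) t)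
      = if j ≤ s then F p s * intChoose (s-j+2*q-1) (q-1) else 0 := by
    intro s hs
    by_cases hjs : j ≤ s
    · rw [if_pos hjs]
      have h2 : ∀ t ∈ Icc (1:ℤ) q, F p s * F q t * P (s-j+1) t
          = F p s * (F q t * P (s-j+1) t) := by intros; ring
      rw [Finset.sum_congr rfl h2, ← Finset.mul_sum, conv_sum q (s-j+1) hq (by omega)]
      congr 2
      ring
    · rw [if_neg hjs]
      apply Finset.sum_eq_zero; intro t ht
      have hP : P (s-j+1) t = 0 := by
        unfold P; rw [if_neg]; push_neg; intro h; omega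
      rw [hP, mul_zero]
  rw [Finset.sum_congr rfl h1, ← Finset.sum_filter]
  have h3 : (Icc (1:ℤ) p).filter (fun s => j ≤ s) = Icc j p := by
    ext s; simp only [Finset.mem_filter, Finset.mem_Icc]; omega
  rw [h3]
  rfl

lemma innerI (q j s : ℤ) (hq : 2 ≤ q) (hj : 2 ≤ j) (hs : j - 1 ≤ s) :
    ∑ i ∈ Icc (j-1) s, intChoose (s-i+2*q-3) (q-2)
      = intChoose (s-j+2*q-1) (q-1) - intChoose (2*q-3) (q-1) := by
  obtain ⟨m, hm⟩ : ∃ m:ℕ, s - j + 1 = m := ⟨(s-j+1).toNat, by omega⟩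
  obtain ⟨c, hc⟩ : ∃ c:ℕ, 2*q-3 = c := ⟨(2*q-3).toNat, by omega⟩
  obtain ⟨k, hk⟩ : ∃ k:ℕ, q-2 = k := ⟨(q-2).toNat, by omega⟩
  rw [sum_Icc_int]
  rw [show (s+1-(j-1)).toNat = m+1 by omega]
  have hterm : ∀ x ∈ range (m+1), intChoose (s-((j-1)+(x:ℤ))+2*q-3) (q-2)
      = (((c+(m-x)).choose k : ℕ) : ℤ) := by
    intro x hx
    simp only [Finset.mem_range] at hx
    exact intChoose_eq_natCast (by push_cast; omega) (by omega)
  rw [Finset.sum_congr rfl hterm]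
  have hcast : ∑ x ∈ range (m+1), (((c+(m-x)).choose k : ℕ) : ℤ)
      = ((∑ x ∈ range (m+1), (c+(m-x)).choose k : ℕ) : ℤ) := by push_cast; rfl
  rw [hcast]
  have h := nat_hs2 c k m
  rw [intChoose_eq_natCast (show s-j+2*q-1 = ((m+c+1:ℕ):ℤ) by push_cast; omega)
      (show q-1 = ((k+1:ℕ):ℤ) by push_cast; omega),
    intChoose_eq_natCast (show 2*q-3 = ((c:ℕ):ℤ) by omega)
      (show q-1 = ((k+1:ℕ):ℤ) by push_cast; omega)]
  omega

lemma hockeyI (p j : ℤ) (hp : 1 ≤ p) (hj : 2 ≤ j) (hjp : j - 1 ≤ p) :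
    ∑ s ∈ Icc (j-1) p, intChoose (2*p-s-1) (p-1) = intChoose (2*p-j+1) p := by
  obtain ⟨m, hm⟩ : ∃ m:ℕ, p - j + 1 = m := ⟨(p-j+1).toNat, by omega⟩
  obtain ⟨k, hk⟩ : ∃ k:ℕ, p-1 = k := ⟨(p-1).toNat, by omega⟩
  rw [sum_Icc_int]
  rw [show (p+1-(j-1)).toNat = m+1 by omega]
  have hterm : ∀ x ∈ range (m+1), intChoose (2*p-((j-1)+(x:ℤ))-1) (p-1)
      = (((k+(m-x)).choose k : ℕ) : ℤ) := by
    intro x hx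
    simp only [Finset.mem_range] at hx
    exact intChoose_eq_natCast (by push_cast; omega) (by omega)
  rw [Finset.sum_congr rfl hterm]
  have hcast : ∑ x ∈ range (m+1), (((k+(m-x)).choose k : ℕ) : ℤ)
      = ((∑ x ∈ range (m+1), (k+(m-x)).choose k : ℕ) : ℤ) := by push_cast; rfl
  rw [hcast]
  have h := nat_hs2 k k m
  have h5 : k.choose (k+1) = 0 := Nat.choose_succ_self k
  rw [intChoose_eq_natCast (show 2*p-j+1 = ((m+k+1:ℕ):ℤ) by push_cast; omega)
      (show p = ((k+1:ℕ):ℤ) by push_cast; omega)]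
  omega


/-- for `p ≥ 1`, `q ≥ 2`, `2 ≤ j ≤ p + q`,
  `∑_{i=j−1}^{p+q−1} B_{p,q−1}(i) + C(2p−j, p)·C(2q−2, q−1)
     = B_{p,q}(j) + C(2p−j+1, p)·C(2q−3, q−1)`. -/
theorem sum_B_step (p q : ℤ) (hp : 1 ≤ p) (hq : 2 ≤ q)
    (j : ℤ) (hj2 : 2 ≤ j) (hjpq : j ≤ p + q) :
    (∑ i ∈ Finset.Icc (j - 1) (p + q - 1), B p (q - 1) i)
        + intChoose (2 * p - j) p * intChoose (2 * q - 2) (q - 1)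
      = B p q j + intChoose (2 * p - j + 1) p * intChoose (2 * q - 3) (q - 1) := by
  have hq1 : (1:ℤ) ≤ q - 1 := by omega
  have step1 : (∑ i ∈ Icc (j-1) (p+q-1), B p (q-1) i)
      = ∑ i ∈ Icc (j-1) (p+q-1), ∑ s ∈ Icc i p,
          intChoose (2*p-s-1) (p-1) * intChoose (s-i+2*q-3) (q-2) := by
    apply Finset.sum_congr rfl
    intro i hi
    simp only [Finset.mem_Icc] at hi
    rw [B_closed p (q-1) i hq1 (by omega)]
    apply Finset.sum_congr rfl; intro s hs
    congr 2 <;> ring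
  have hswap : (∑ i ∈ Icc (j-1) (p+q-1), ∑ s ∈ Icc i p,
          intChoose (2*p-s-1) (p-1) * intChoose (s-i+2*q-3) (q-2))
      = ∑ s ∈ Icc (j-1) p, ∑ i ∈ Icc (j-1) s,
          intChoose (2*p-s-1) (p-1) * intChoose (s-i+2*q-3) (q-2) := by
    apply Finset.sum_comm'
    intro i s
    simp only [Finset.mem_Icc]
    omega
  have step3 : (∑ s ∈ Icc (j-1) p, ∑ i ∈ Icc (j-1) s,
          intChoose (2*p-s-1) (p-1) * intChoose (s-i+2*q-3) (q-2))
      = ∑ s ∈ Icc (j-1) p, intChoose (2*p-s-1) (p-1) *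
          (intChoose (s-j+2*q-1) (q-1) - intChoose (2*q-3) (q-1)) := by
    apply Finset.sum_congr rfl
    intro s hs
    simp only [Finset.mem_Icc] at hs
    rw [← Finset.mul_sum, innerI q j s hq hj2 hs.1]
  have step4 : (∑ s ∈ Icc (j-1) p, intChoose (2*p-s-1) (p-1) *
          (intChoose (s-j+2*q-1) (q-1) - intChoose (2*q-3) (q-1)))
      = (∑ s ∈ Icc (j-1) p, intChoose (2*p-s-1) (p-1) * intChoose (s-j+2*q-1) (q-1))
        - (∑ s ∈ Icc (j-1) p, intChoose (2*p-s-1) (p-1)) * intChoose (2*q-3) (q-1) := by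
    rw [Finset.sum_mul, ← Finset.sum_sub_distrib]
    apply Finset.sum_congr rfl; intros; ring
  rw [step1, hswap, step3, step4, B_closed p q j (by omega) (by omega)]
  by_cases hcase : j - 1 ≤ p
  · rw [hockeyI p j hp hj2 hcase]
    have hins : Icc (j-1) p = insert (j-1) (Icc j p) := by
      ext s; simp only [Finset.mem_insert, Finset.mem_Icc]; omega
    have hnot : (j-1) ∉ Icc j p := by simp only [Finset.mem_Icc]; omega
    rw [hins, Finset.sum_insert hnot]
    have e1 : intChoose (2*p-(j-1)-1) (p-1) = intChoose (2*p-j) (p-1) := by congr 1; ring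
    have e2 : intChoose ((j-1)-j+2*q-1) (q-1) = intChoose (2*q-2) (q-1) := by congr 1; ring
    rw [e1, e2, doubling q hq, intChoose_pascal (2*p-j) p (by omega)]
    ring
  · rw [Finset.Icc_eq_empty (by omega : ¬ j-1 ≤ p), Finset.Icc_eq_empty (by omega : ¬ j ≤ p)]
    simp only [Finset.sum_empty]
    rw [intChoose_of_lt (show 2*p-j < p by omega), intChoose_of_lt (show 2*p-j+1 < p by omega)]
    ring
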